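/- For a loopless matroid M, an element e, and a weighting x : E → ℝ, the difference between the minimum basis weight of the deletion M\e and that of the contraction M/e equals the min-max weight μ_e(x). -/

import Mathlib

open Matroid Set

variable {α : Type*}

/-- A circuit of a matroid: a minimal dependent set. -/
def Matroid.IsCircuit' (M : Matroid α) (C : Set α) : Prop :=
  M.Dep C ∧ ∀ ⦃D⦄, D ⊂ C → M.Indep D

/-- Looplessness in the sense of the paper: no element is a loop
(every singleton of the ground set is independent) and no element is a
coloop (no element lies in all bases). -/
def Matroid.PaperLoopless (M : Matroid α) : Prop :=
  ∀ e ∈ M.E, M.Indep {e} ∧ ∃ B, M.IsBase B ∧ e ∉ B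

/-- The weight `x(B)` of a set of ground elements. -/
noncomputable def setWeight (x : α → ℝ) (B : Set α) : ℝ := ∑ᶠ e ∈ B, x e

/-- The min-max weight `μ_e(x)`: the minimum over circuits `C` containing `e`
of the maximum weight of an element of `C - e`. -/
noncomputable def muWeight (M : Matroid α) (x : α → ℝ) (e : α) : ℝ :=
  sInf {w | ∃ C, M.IsCircuit' C ∧ e ∈ C ∧ w = sSup (x '' (C \ {e}))}

/-- The bottleneck weight `b_e(x) = min {x(e), μ_e(x)}`. -/
noncomputable def bottleneck (M : Matroid α) (x : α → ℝ) (e : α) : ℝ :=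
  min (x e) (muWeight M x e)

/-- The minimum weight of a basis of `M`. -/
noncomputable def mwb (M : Matroid α) (x : α → ℝ) : ℝ :=
  sInf {w | ∃ B, M.IsBase B ∧ w = setWeight x B}

/-- `B` is an `x`-optimal basis of `M`. -/
def IsOptimalBase (M : Matroid α) (x : α → ℝ) (B : Set α) : Prop :=
  M.IsBase B ∧ ∀ B', M.IsBase B' → setWeight x B ≤ setWeight x B'

/-- Deletion of a single element. -/
noncomputable def Matroid.del (M : Matroid α) (e : α) : Matroid α :=
  M ↾ (M.E \ {e})

/-- Contraction of a single element, defined by duality: `M/e = (M✶ \ e)✶`. -/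
noncomputable def Matroid.con (M : Matroid α) (e : α) : Matroid α :=
  ((M✶ ↾ (M.E \ {e}))✶)

section Aux

variable {M : Matroid α} {B B₀ C I S : Set α} {e f a : α} {x : α → ℝ}

lemma setWeight_eq_finset_sum (x : α → ℝ) (hS : S.Finite) :
    setWeight x S = ∑ i ∈ hS.toFinset, x i := by
  rw [setWeight, ← finsum_mem_coe_finset, hS.coe_toFinset]

lemma setWeight_insert (hS : S.Finite) (haS : a ∉ S) :
    setWeight x (insert a S) = x a + setWeight x S := by
  classical
  rw [setWeight_eq_finset_sum x (hS.insert a), setWeight_eq_finset_sum x hS,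
    Set.Finite.toFinset_insert, Finset.sum_insert (by simpa using haS)]

lemma setWeight_diff (hS : S.Finite) (haS : a ∈ S) :
    setWeight x (S \ {a}) = setWeight x S - x a := by
  have h1 : setWeight x (insert a (S \ {a})) = x a + setWeight x (S \ {a}) :=
    setWeight_insert (hS.diff) (by simp)
  rw [insert_diff_singleton, insert_eq_self.2 haS] at h1
  linarith

lemma exists_circuit_subset' (M : Matroid α) :
    ∀ n (X : Set α), X.Finite → X.ncard ≤ n → M.Dep X → ∃ C ⊆ X, M.IsCircuit' C := by
  intro n
  induction n with
  | zero =>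
    intro X hfin hcard hdep
    rw [Nat.le_zero, Set.ncard_eq_zero hfin] at hcard
    subst hcard
    exact absurd M.empty_indep hdep.not_indep
  | succ n ih =>
    intro X hfin hcard hdep
    by_cases h : ∀ D, D ⊂ X → M.Indep D
    · exact ⟨X, Subset.rfl, hdep, fun D hD => h D hD⟩
    push_neg at h
    obtain ⟨D, hDX, hD⟩ := h
    have hDdep : M.Dep D := ⟨hD, hDX.subset.trans hdep.subset_ground⟩
    have hlt : D.ncard < X.ncard := Set.ncard_lt_ncard hDX hfin
    obtain ⟨C, hCD, hC⟩ := ih D (hfin.subset hDX.subset) (by omega) hDdep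
    exact ⟨C, hCD.trans hDX.subset, hC⟩

lemma exists_circuit_subset {X : Set α} (hfin : X.Finite) (hdep : M.Dep X) :
    ∃ C ⊆ X, M.IsCircuit' C :=
  exists_circuit_subset' M X.ncard X hfin le_rfl hdep

lemma Matroid.IsCircuit'.diff_indep (hC : M.IsCircuit' C) (he : e ∈ C) : M.Indep (C \ {e}) :=
  hC.2 (sdiff_singleton_ssubset.2 he)

lemma Matroid.IsCircuit'.mem_closure_diff (hC : M.IsCircuit' C) (he : e ∈ C) :
    e ∈ M.closure (C \ {e}) := by
  rw [(hC.diff_indep he).mem_closure_iff]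
  left
  rw [insert_diff_singleton, insert_eq_self.2 he]
  exact hC.1

lemma base_of_indep_encard [M.Finite] (hI : M.Indep I) (hB : M.IsBase B)
    (h : I.encard = B.encard) : M.IsBase I := by
  obtain ⟨B', hB', hIB'⟩ := hI.exists_isBase_superset
  have hfin : B'.Finite := M.set_finite B' hB'.subset_ground
  have : I = B' := hfin.eq_of_subset_of_encard_le' hIB'
    (by rw [hB'.encard_eq_encard_of_isBase hB, ← h])
  rwa [this]

lemma Matroid.IsBase.insert_dep' (hB : M.IsBase B) (he : e ∈ M.E) (heB : e ∉ B) :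
    M.Dep (insert e B) := by
  refine ⟨fun hind => heB ?_, insert_subset he hB.subset_ground⟩
  have h2 := hB.eq_of_subset_indep hind (subset_insert e B)
  rw [h2]
  exact mem_insert e B

/-- Exchange lemma A: swap `f ∈ C - e` out of `B` for `e`. -/
lemma base_insert_diff [M.Finite] (hB : M.IsBase B) (heB : e ∉ B) (heE : e ∈ M.E)
    (hC : M.IsCircuit' C) (hCB : C ⊆ insert e B) (heC : e ∈ C) (hf : f ∈ C \ {e}) :
    M.IsBase (insert e (B \ {f})) := by
  have hfB : f ∈ B := by
    rcases hCB hf.1 with h | h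
    · exact absurd h hf.2
    · exact h
  have hfe : f ≠ e := hf.2
  have h1 : M.Indep (B \ {f}) := hB.indep.subset diff_subset
  have heBf : e ∉ B \ {f} := fun h => heB h.1
  have hecl : e ∉ M.closure (B \ {f}) := by
    intro hecl
    have hfcl : f ∈ M.closure (C \ {f}) := hC.mem_closure_diff hf.1
    have hsub : C \ {f} ⊆ insert e (B \ {f}) := by
      rintro g ⟨hgC, hgf⟩
      rcases hCB hgC with h | h
      · exact h ▸ mem_insert _ _
      · exact mem_insert_of_mem _ ⟨h, hgf⟩
    have hcleq : M.closure (insert e (B \ {f})) = M.closure (B \ {f}) :=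
      closure_insert_eq_of_mem_closure hecl
    have hfcl2 : f ∈ M.closure (B \ {f}) := by
      have := M.closure_subset_closure hsub
      rw [hcleq] at this
      exact this hfcl
    rw [h1.mem_closure_iff_of_notMem (by simp)] at hfcl2
    rw [insert_diff_singleton, insert_eq_self.2 hfB] at hfcl2
    exact hfcl2.not_indep hB.indep
  have hind : M.Indep (insert e (B \ {f})) := by
    rw [h1.insert_indep_iff_of_notMem heBf]
    exact ⟨heE, hecl⟩
  refine base_of_indep_encard hind hB ?_
  rw [encard_insert_of_notMem heBf, encard_diff_singleton_add_one hfB]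

/-- Exchange lemma B': for every circuit `C ∋ e` and base `B ∋ e`, some
`f ∈ C - e` can replace `e` in `B`. -/
lemma exists_swap' [M.Finite] (hB : M.IsBase B) (heB : e ∈ B)
    (hC : M.IsCircuit' C) (heC : e ∈ C) :
    ∃ f ∈ C \ {e}, M.IsBase (insert f (B \ {e})) := by
  have h1 : M.Indep (B \ {e}) := hB.indep.subset diff_subset
  have hex : ∃ f ∈ C \ {e}, f ∉ M.closure (B \ {e}) := by
    by_contra h
    push_neg at h
    have hsub : C \ {e} ⊆ M.closure (B \ {e}) := fun g hg => h g hg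
    have hecl : e ∈ M.closure (B \ {e}) := by
      have h2 := M.closure_subset_closure_of_subset_closure hsub
      exact h2 (hC.mem_closure_diff heC)
    rw [h1.mem_closure_iff_of_notMem (by simp)] at hecl
    rw [insert_diff_singleton, insert_eq_self.2 heB] at hecl
    exact hecl.not_indep hB.indep
  obtain ⟨f, hf, hfcl⟩ := hex
  have hfE : f ∈ M.E := hC.1.subset_ground hf.1
  have hfB : f ∉ B \ {e} := fun h =>
    hfcl (M.subset_closure _ (diff_subset.trans hB.subset_ground) h)
  have hind : M.Indep (insert f (B \ {e})) := by
    rw [h1.insert_indep_iff_of_notMem hfB]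
    exact ⟨hfE, hfcl⟩
  refine ⟨f, hf, base_of_indep_encard hind hB ?_⟩
  rw [encard_insert_of_notMem hfB, encard_diff_singleton_add_one heB]

/-- Bases of the single-element deletion. -/
lemma del_base_iff (hB₀ : M.IsBase B₀) (heB₀ : e ∉ B₀) :
    (M.del e).IsBase B ↔ M.IsBase B ∧ e ∉ B := by
  rw [Matroid.del, isBase_restrict_iff diff_subset]
  constructor
  · intro h
    have heB : e ∉ B := fun heB => (h.subset heB).2 rfl
    refine ⟨h.indep.isBase_of_ground_subset_closure ?_, heB⟩
    have h2 : M.E ⊆ M.closure (M.E \ {e}) := by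
      have h3 := M.closure_subset_closure (subset_diff_singleton hB₀.subset_ground heB₀)
      rwa [hB₀.closure_eq] at h3
    rwa [h.closure_eq_closure]
  · rintro ⟨hB, heB⟩
    exact hB.indep.isBasis_of_subset_of_subset_closure
      (subset_diff_singleton hB.subset_ground heB)
      (by rw [hB.closure_eq]; exact diff_subset)

/-- Bases of the single-element contraction. -/
lemma con_base_iff (he : e ∈ M.E) (heI : M.Indep {e}) :
    (M.con e).IsBase B ↔ M.IsBase (insert e B) ∧ e ∉ B := by
  obtain ⟨B₁, hB₁, heB₁⟩ := heI.exists_isBase_superset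
  have heB₁' : e ∈ B₁ := heB₁ rfl
  have hdual : M✶.IsBase (M.E \ B₁) := by
    rw [dual_isBase_iff diff_subset, diff_diff_cancel_left hB₁.subset_ground]
    exact hB₁
  have hne : e ∉ M.E \ B₁ := fun h => h.2 heB₁'
  have hrw : (M✶ ↾ (M.E \ {e})) = M✶.del e := by rw [Matroid.del, dual_ground]
  rw [Matroid.con, hrw, dual_isBase_iff']
  rw [show (M✶.del e).E = M.E \ {e} by rw [Matroid.del, restrict_ground_eq, dual_ground]]
  rw [del_base_iff hdual hne, dual_isBase_iff']
  constructor
  · rintro ⟨⟨⟨hbase, _⟩, _⟩, hBsub⟩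
    have heB : e ∉ B := fun h => (hBsub h).2 rfl
    have hset : M.E \ ((M.E \ {e}) \ B) = insert e B := by
      ext g
      simp only [mem_diff, mem_singleton_iff, mem_insert_iff, not_and, not_not]
      constructor
      · rintro ⟨hgE, hg⟩
        by_cases hge : g = e
        · exact Or.inl hge
        · exact Or.inr (hg ⟨hgE, hge⟩)
      · rintro (rfl | hgB)
        · exact ⟨he, fun h => absurd rfl h.2⟩
        · exact ⟨(hBsub hgB).1, fun _ => hgB⟩
    rw [hset] at hbase
    exact ⟨hbase, heB⟩
  · rintro ⟨hbase, heB⟩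
    have hBsub : B ⊆ M.E \ {e} :=
      subset_diff_singleton ((subset_insert e B).trans hbase.subset_ground) heB
    have hset : M.E \ ((M.E \ {e}) \ B) = insert e B := by
      ext g
      simp only [mem_diff, mem_singleton_iff, mem_insert_iff, not_and, not_not]
      constructor
      · rintro ⟨hgE, hg⟩
        by_cases hge : g = e
        · exact Or.inl hge
        · exact Or.inr (hg ⟨hgE, hge⟩)
      · rintro (rfl | hgB)
        · exact ⟨he, fun h => absurd rfl h.2⟩
        · exact ⟨(hBsub hgB).1, fun _ => hgB⟩
    refine ⟨⟨⟨by rw [hset]; exact hbase, diff_subset.trans diff_subset⟩, fun h => h.1.2 rfl⟩, hBsub⟩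

/-- `mwb` is attained and is a lower bound, for matroids with finite ground set. -/
lemma mwb_spec (N : Matroid α) (hE : N.E.Finite) (x : α → ℝ) :
    (∃ B, N.IsBase B ∧ mwb N x = setWeight x B) ∧
      ∀ B, N.IsBase B → mwb N x ≤ setWeight x B := by
  have hfin : {w | ∃ B, N.IsBase B ∧ w = setWeight x B}.Finite := by
    have hsub : {w | ∃ B, N.IsBase B ∧ w = setWeight x B} ⊆
        setWeight x '' {B | B ⊆ N.E} := by
      rintro w ⟨B, hB, rfl⟩
      exact ⟨B, hB.subset_ground, rfl⟩
    exact ((hE.finite_subsets).image _).subset hsub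
  have hne : {w | ∃ B, N.IsBase B ∧ w = setWeight x B}.Nonempty := by
    obtain ⟨B, hB⟩ := N.exists_isBase
    exact ⟨_, B, hB, rfl⟩
  constructor
  · obtain ⟨B, hB, hw⟩ := hne.csInf_mem hfin
    exact ⟨B, hB, hw⟩
  · exact fun B hB => csInf_le hfin.bddBelow ⟨B, hB, rfl⟩

/-- `muWeight` is attained and is a lower bound. -/
lemma mu_spec (M : Matroid α) (hE : M.E.Finite) (x : α → ℝ) (e : α)
    (hex : ∃ C, M.IsCircuit' C ∧ e ∈ C) :
    (∃ C, M.IsCircuit' C ∧ e ∈ C ∧ muWeight M x e = sSup (x '' (C \ {e}))) ∧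
      ∀ C, M.IsCircuit' C → e ∈ C → muWeight M x e ≤ sSup (x '' (C \ {e})) := by
  have hfin : {w | ∃ C, M.IsCircuit' C ∧ e ∈ C ∧ w = sSup (x '' (C \ {e}))}.Finite := by
    have hsub : {w | ∃ C, M.IsCircuit' C ∧ e ∈ C ∧ w = sSup (x '' (C \ {e}))} ⊆
        (fun C => sSup (x '' (C \ {e}))) '' {C | C ⊆ M.E} := by
      rintro w ⟨C, hC, _, rfl⟩
      exact ⟨C, hC.1.subset_ground, rfl⟩
    exact ((hE.finite_subsets).image _).subset hsub
  have hne : {w | ∃ C, M.IsCircuit' C ∧ e ∈ C ∧ w = sSup (x '' (C \ {e}))}.Nonempty := by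
    obtain ⟨C, hC, heC⟩ := hex
    exact ⟨_, C, hC, heC, rfl⟩
  constructor
  · obtain ⟨C, hC, heC, hw⟩ := hne.csInf_mem hfin
    exact ⟨C, hC, heC, hw⟩
  · exact fun C hC heC => csInf_le hfin.bddBelow ⟨C, hC, heC, rfl⟩

lemma circuit_diff_nonempty (hC : M.IsCircuit' C) (heC : e ∈ C)
    (heI : M.Indep {e}) : (C \ {e}).Nonempty := by
  rw [nonempty_iff_ne_empty]
  intro h
  have : C = {e} := by
    apply Subset.antisymm
    · intro g hg
      by_contra hge
      exact absurd (show g ∈ C \ {e} from ⟨hg, hge⟩) (by rw [h]; exact notMem_empty g)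
    · exact singleton_subset_iff.2 heC
  exact (this ▸ hC.1).not_indep heI

end Aux

/-- the deletion/contraction difference is `μ_e(x)`. -/
theorem stmt11 (M : Matroid α) [M.Finite] (hM : M.PaperLoopless)
    (x : α → ℝ) {e : α} (he : e ∈ M.E) :
    mwb (M.del e) x - mwb (M.con e) x = muWeight M x e := by
  have hE : M.E.Finite := M.ground_finite
  obtain ⟨heI, B₀, hB₀, heB₀⟩ := hM e he
  -- existence of a circuit containing e
  have hCex : ∃ C ⊆ insert e B₀, M.IsCircuit' C ∧ e ∈ C := by
    have hdep : M.Dep (insert e B₀) := hB₀.insert_dep' he heB₀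
    obtain ⟨C, hCsub, hC⟩ := exists_circuit_subset
      (hE.subset hdep.subset_ground) hdep
    refine ⟨C, hCsub, hC, ?_⟩
    by_contra heC
    have hCB : C ⊆ B₀ := fun g hg => ((hCsub hg).resolve_left (fun h => heC (h ▸ hg)))
    exact hC.1.not_indep (hB₀.indep.subset hCB)
  obtain ⟨C₁, _, hC₁, heC₁⟩ := hCex
  have hmu := mu_spec M hE x e ⟨C₁, hC₁, heC₁⟩
  -- ground set facts for del/con
  have hdelE : (M.del e).E.Finite := by
    rw [Matroid.del, restrict_ground_eq]; exact hE.diff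
  have hconE : (M.con e).E.Finite := by
    rw [Matroid.con, dual_ground, restrict_ground_eq]; exact hE.diff
  have hdel := mwb_spec (M.del e) hdelE x
  have hcon := mwb_spec (M.con e) hconE x
  -- Direction 1 : mwb del ≤ muWeight + mwb con
  have hdir1 : mwb (M.del e) x ≤ muWeight M x e + mwb (M.con e) x := by
    obtain ⟨B', hB'base, hB'w⟩ := hcon.1
    rw [con_base_iff he heI] at hB'base
    obtain ⟨hBbase, heB'⟩ := hB'base
    obtain ⟨C, hC, heC, hmuw⟩ := hmu.1
    obtain ⟨f, hf, hfbase⟩ := exists_swap' hBbase (mem_insert e B') hC heC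
    rw [show insert e B' \ {e} = B' from insert_diff_self_of_notMem heB'] at hfbase
    have hfe : f ≠ e := hf.2
    have hfB' : f ∉ B' := by
      intro hfB'
      rw [insert_eq_self.2 hfB'] at hfbase
      -- both B' and insert e B' are bases, but B' ⊂ insert e B'
      have := hfbase.eq_of_subset_indep hBbase.indep (subset_insert e B')
      exact heB' (by rw [this]; exact mem_insert e B')
    have hdelbase : (M.del e).IsBase (insert f B') := by
      rw [del_base_iff hB₀ heB₀]
      refine ⟨hfbase, ?_⟩
      rintro (h | h)
      · exact hfe h.symm
      · exact heB' h
    have hB'fin : B'.Finite := hE.subset ((subset_insert e B').trans hBbase.subset_ground)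
    have hwt : setWeight x (insert f B') = x f + setWeight x B' :=
      setWeight_insert hB'fin hfB'
    have hxf : x f ≤ sSup (x '' (C \ {e})) := by
      have hCfin : (C \ {e}).Finite := (hE.subset hC.1.subset_ground).diff
      exact le_csSup (hCfin.image x).bddAbove ⟨f, hf, rfl⟩
    calc mwb (M.del e) x ≤ setWeight x (insert f B') := hdel.2 _ hdelbase
      _ = x f + setWeight x B' := hwt
      _ ≤ sSup (x '' (C \ {e})) + setWeight x B' := by linarith
      _ = muWeight M x e + mwb (M.con e) x := by rw [hmuw, hB'w]
  -- Direction 2 : mwb con ≤ mwb del - muWeight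
  have hdir2 : mwb (M.con e) x + muWeight M x e ≤ mwb (M.del e) x := by
    obtain ⟨B, hBbase, hBw⟩ := hdel.1
    rw [del_base_iff hB₀ heB₀] at hBbase
    obtain ⟨hBbase, heB⟩ := hBbase
    have hdep : M.Dep (insert e B) := hBbase.insert_dep' he heB
    obtain ⟨C₀, hC₀sub, hC₀⟩ := exists_circuit_subset (hE.subset hdep.subset_ground) hdep
    have heC₀ : e ∈ C₀ := by
      by_contra heC₀
      have hCB : C₀ ⊆ B := fun g hg => ((hC₀sub hg).resolve_left (fun h => heC₀ (h ▸ hg)))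
      exact hC₀.1.not_indep (hBbase.indep.subset hCB)
    -- get the element of C₀ \ {e} achieving the sup
    have hCfin : (C₀ \ {e}).Finite := (hE.subset hC₀.1.subset_ground).diff
    have hCne : (C₀ \ {e}).Nonempty := circuit_diff_nonempty hC₀ heC₀ heI
    obtain ⟨f, hf, hxf⟩ := (hCne.image x).csSup_mem (hCfin.image x)
    have hmule : muWeight M x e ≤ x f := by
      rw [hxf]; exact hmu.2 C₀ hC₀ heC₀
    have hfB : f ∈ B := by
      rcases hC₀sub hf.1 with h | h
      · exact absurd h hf.2
      · exact h
    have hbase2 : M.IsBase (insert e (B \ {f})) :=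
      base_insert_diff hBbase heB he hC₀ hC₀sub heC₀ hf
    have hconbase : (M.con e).IsBase (B \ {f}) := by
      rw [con_base_iff he heI]
      exact ⟨hbase2, fun h => heB h.1⟩
    have hBfin : B.Finite := hE.subset hBbase.subset_ground
    have hwt : setWeight x (B \ {f}) = setWeight x B - x f := setWeight_diff hBfin hfB
    have h1 : mwb (M.con e) x ≤ setWeight x B - x f := by
      rw [← hwt]; exact hcon.2 _ hconbase
    rw [hBw]
    linarith
  linarith
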